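/- Let x, x_1, ..., x_n be i.i.d. nonnegative integrable real random variables with common continuous cumulative distribution function F satisfying F(0) = 0. Then sum_{i=1}^n E[ min{x_1, ..., x_i} ] ≥ E[x] + sum_{i=1}^{⌊log_2 n⌋} 2^{i−1} · ∫_0^∞ (1 − F(x))^{2^i} dx. -/

import Mathlib

open MeasureTheory ProbabilityTheory

private lemma dyadic_sum_aux (g : ℕ → ℝ) (hg : ∀ a b : ℕ, a ≤ b → g b ≤ g a) :
    ∀ L : ℕ, g 0 + ∑ i ∈ Finset.Icc 1 L, (2:ℝ)^(i-1) * g (2^i - 1)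
      ≤ ∑ k ∈ Finset.range (2^L), g k := by
  intro L
  induction L with
  | zero => simp
  | succ L ih =>
    have h1 : (2:ℕ)^L ≤ 2^(L+1) := Nat.pow_le_pow_right (by norm_num) (Nat.le_succ L)
    have hsplit : ∑ k ∈ Finset.range (2^(L+1)), g k
        = ∑ k ∈ Finset.range (2^L), g k + ∑ k ∈ Finset.Ico (2^L) (2^(L+1)), g k := by
      exact (Finset.sum_range_add_sum_Ico g h1).symm
    have hIcc : ∑ i ∈ Finset.Icc 1 (L+1), (2:ℝ)^(i-1) * g (2^i - 1)
        = (∑ i ∈ Finset.Icc 1 L, (2:ℝ)^(i-1) * g (2^i - 1))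
          + (2:ℝ)^L * g (2^(L+1) - 1) := by
      rw [Finset.sum_Icc_succ_top (by omega)]
      norm_num
    have hlow : (2:ℝ)^L * g (2^(L+1) - 1) ≤ ∑ k ∈ Finset.Ico (2^L) (2^(L+1)), g k := by
      have hcard : (Finset.Ico (2^L) (2^(L+1))).card = 2^L := by
        rw [Nat.card_Ico, pow_succ]
        omega
      calc (2:ℝ)^L * g (2^(L+1) - 1)
          = ∑ _k ∈ Finset.Ico (2^L) (2^(L+1)), g (2^(L+1) - 1) := by
            rw [Finset.sum_const, hcard, nsmul_eq_mul]
            push_cast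
            ring
        _ ≤ ∑ k ∈ Finset.Ico (2^L) (2^(L+1)), g k := by
            refine Finset.sum_le_sum fun k hk => ?_
            have := Finset.mem_Ico.1 hk
            exact hg k (2^(L+1) - 1) (by omega)
    rw [hsplit, hIcc]
    linarith

/-- Quantile-free lower bound on the expected offline optimum:
for i.i.d. nonnegative integrable random variables with continuous cdf `F` and `F 0 = 0`,
`∑_{i=1}^n E[min {x_1,…,x_i}] ≥ E[x] + ∑_{i=1}^{⌊log₂ n⌋} 2^{i-1} ∫_0^∞ (1-F t)^{2^i} dt`. -/
theorem offline_opt_lower_bound_unknown_dist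
    {Ω : Type*} [MeasureSpace Ω] [IsProbabilityMeasure (ℙ : Measure Ω)]
    (n : ℕ) (hn : 1 ≤ n) (X : ℕ → Ω → ℝ) (μ : Measure ℝ)
    (hmeas : ∀ i, Measurable (X i))
    (hindep : iIndepFun X ℙ)
    (hlaw : ∀ i, Measure.map (X i) ℙ = μ)
    (hint : ∀ i, Integrable (X i) ℙ)
    (hnonneg : ∀ i, 0 ≤ᵐ[ℙ] X i)
    (F : ℝ → ℝ) (hF : ∀ t, F t = (μ (Set.Iic t)).toReal)
    (hFcont : Continuous F) (hF0 : F 0 = 0) :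
    ∑ i ∈ Finset.range n,
        ∫ ω, (Finset.range (i + 1)).inf' Finset.nonempty_range_add_one (fun j => X j ω) ∂ℙ
      ≥ (∫ t, t ∂μ)
        + ∑ i ∈ Finset.Icc 1 (Nat.log 2 n),
            (2 : ℝ) ^ (i - 1) * ∫ t in Set.Ioi (0 : ℝ), (1 - F t) ^ (2 ^ i) := by
  set M : ℕ → Ω → ℝ :=
    fun i ω => (Finset.range (i + 1)).inf' Finset.nonempty_range_add_one (fun j => X j ω)
    with hMdef
  haveI : IsProbabilityMeasure μ := hlaw 0 ▸ Measure.isProbabilityMeasure_map (hmeas 0).aemeasurable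
  -- measurability of the partial minima
  have hM : ∀ i, Measurable (M i) := by
    intro i
    induction i with
    | zero =>
      have : M 0 = X 0 := by
        funext ω; simp [hMdef]
      rw [this]; exact hmeas 0
    | succ i ih =>
      have : M (i+1) = fun ω => (X (i+1) ω) ⊓ (M i ω) := by
        funext ω
        simp [hMdef, Finset.range_add_one]
      rw [this]; exact (hmeas (i+1)).inf ih
  have hae : ∀ᵐ ω ∂(ℙ : Measure Ω), ∀ j, 0 ≤ X j ω := ae_all_iff.2 hnonneg
  have hMnn : ∀ i, 0 ≤ᵐ[(ℙ : Measure Ω)] M i := by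
    intro i
    filter_upwards [hae] with ω hω
    exact Finset.le_inf' _ _ fun j _ => hω j
  have hMleX0 : ∀ i ω, M i ω ≤ X 0 ω := by
    intro i ω
    exact Finset.inf'_le _ (Finset.mem_range.2 (Nat.succ_pos i))
  have hMint : ∀ i, Integrable (M i) ℙ := by
    intro i
    refine (hint 0).mono (hM i).aestronglyMeasurable ?_
    filter_upwards [hae] with ω hω
    rw [Real.norm_eq_abs, Real.norm_eq_abs,
      abs_of_nonneg (Finset.le_inf' _ _ fun j _ => hω j), abs_of_nonneg (hω 0)]
    exact hMleX0 i ω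
  -- the survival function
  have hsurv : ∀ (j : ℕ) (t : ℝ), ((ℙ : Measure Ω) (X j ⁻¹' Set.Ioi t)).toReal = 1 - F t := by
    intro j t
    have h1 : (ℙ : Measure Ω) (X j ⁻¹' Set.Ioi t) = μ (Set.Ioi t) := by
      rw [← hlaw j, Measure.map_apply (hmeas j) measurableSet_Ioi]
    have h2 : μ (Set.Ioi t) = 1 - μ (Set.Iic t) := by
      rw [← Set.compl_Iic, measure_compl measurableSet_Iic (measure_ne_top μ _), measure_univ]
    rw [h1, h2, ENNReal.toReal_sub_of_le prob_le_one ENNReal.one_ne_top,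
      ENNReal.toReal_one, hF]
  -- layer-cake formula for each partial minimum
  have hkey : ∀ i, ∫ ω, M i ω ∂ℙ = ∫ t in Set.Ioi (0:ℝ), (1 - F t) ^ (i+1) := by
    intro i
    rw [(hMint i).integral_eq_integral_meas_lt (hMnn i)]
    have hpt : ∀ t : ℝ, ((ℙ : Measure Ω) {a | t < M i a}).toReal = (1 - F t) ^ (i+1) := by
      intro t
      have hset : {a | t < M i a} = ⋂ j ∈ Finset.range (i+1), X j ⁻¹' Set.Ioi t := by
        ext ω
        simp [hMdef, Finset.lt_inf'_iff]
      rw [hset, hindep.meas_biInter (fun j _ => ⟨Set.Ioi t, measurableSet_Ioi, rfl⟩),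
        ENNReal.toReal_prod, Finset.prod_congr rfl (fun j _ => hsurv j t),
        Finset.prod_const, Finset.card_range]
    simp_rw [measureReal_def, hpt]
  -- first term
  have hM0 : ∫ ω, M 0 ω ∂ℙ = ∫ t, t ∂μ := by
    have hX0 : M 0 = X 0 := by funext ω; simp [hMdef]
    rw [hX0, ← hlaw 0]
    exact (integral_map (hmeas 0).aemeasurable aestronglyMeasurable_id).symm
  -- monotonicity of expectations of minima
  have hMmono : ∀ a b : ℕ, a ≤ b → ∫ ω, M b ω ∂ℙ ≤ ∫ ω, M a ω ∂ℙ := by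
    intro a b hab
    refine integral_mono (hMint b) (hMint a) fun ω => ?_
    refine Finset.le_inf' _ _ fun j hj => ?_
    exact Finset.inf'_le _ (Finset.mem_range.2
      (lt_of_lt_of_le (Finset.mem_range.1 hj) (by omega)))
  have hMi0 : ∀ i, 0 ≤ ∫ ω, M i ω ∂ℙ := fun i => integral_nonneg_of_ae (hMnn i)
  -- assemble
  set g : ℕ → ℝ := fun i => ∫ ω, M i ω ∂ℙ with hgdef
  set L := Nat.log 2 n with hLdef
  have h2L : 2 ^ L ≤ n := Nat.pow_log_le_self 2 (by omega)
  have hdy := dyadic_sum_aux g hMmono L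
  have hsub : ∑ k ∈ Finset.range (2^L), g k ≤ ∑ i ∈ Finset.range n, g i :=
    Finset.sum_le_sum_of_subset_of_nonneg (Finset.range_subset_range.2 h2L)
      (fun i _ _ => hMi0 i)
  have hterm : ∑ i ∈ Finset.Icc 1 L, (2:ℝ)^(i-1) * g (2^i - 1)
      = ∑ i ∈ Finset.Icc 1 L,
          (2:ℝ)^(i-1) * ∫ t in Set.Ioi (0:ℝ), (1 - F t) ^ (2^i) := by
    refine Finset.sum_congr rfl fun i _ => ?_
    rw [hgdef]
    simp only
    rw [hkey (2^i - 1), Nat.sub_add_cancel Nat.one_le_two_pow]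
  rw [ge_iff_le, ← hM0]
  calc (∫ ω, M 0 ω ∂ℙ)
        + ∑ i ∈ Finset.Icc 1 L, (2:ℝ)^(i-1) * ∫ t in Set.Ioi (0:ℝ), (1 - F t) ^ (2^i)
      = g 0 + ∑ i ∈ Finset.Icc 1 L, (2:ℝ)^(i-1) * g (2^i - 1) := by rw [hterm]
    _ ≤ ∑ k ∈ Finset.range (2^L), g k := hdy
    _ ≤ ∑ i ∈ Finset.range n, g i := hsub
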